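/- Let v1=(1,0,0), v2=(0,1,0), v3=(0,0,1), v4=(0,-1,-1), v5=(-1,0,-1), v6=(-2,-1,0), v7=(-1,-1,-1), v8=(-2,-1,-1) in ℝ³, and consider the 12 cones ⟨v1,v2,v3⟩, ⟨v1,v2,v4⟩, ⟨v2,v4,v5⟩, ⟨v2,v3,v5⟩, ⟨v3,v5,v6⟩, ⟨v1,v3,v6⟩, ⟨v1,v4,v6⟩, ⟨v4,v5,v7⟩, ⟨v4,v6,v7⟩, ⟨v5,v6,v8⟩, ⟨v5,v7,v8⟩, ⟨v6,v7,v8⟩. If Ψ : ℝ³ → ℝ is a convex function such that for each of these 12 cones there exists a linear functional ℓ : ℝ³ → ℝ with Ψ(x) = ℓ(x) for all x in that cone, then there exists a single linear functional ℓ : ℝ³ → ℝ with Ψ(x) = ℓ(x) for all x ∈ ℝ³. -/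

import Mathlib

def cone3 (u v w : Fin 3 → ℝ) : Set (Fin 3 → ℝ) :=
  {x | ∃ α β γ : ℝ, 0 ≤ α ∧ 0 ≤ β ∧ 0 ≤ γ ∧ x = α • u + β • v + γ • w}

private lemma memg1 (u v w : Fin 3 → ℝ) : u ∈ cone3 u v w :=
  ⟨1, 0, 0, zero_le_one, le_refl 0, le_refl 0, by simp⟩
private lemma memg2 (u v w : Fin 3 → ℝ) : v ∈ cone3 u v w :=
  ⟨0, 1, 0, le_refl 0, zero_le_one, le_refl 0, by simp⟩
private lemma memg3 (u v w : Fin 3 → ℝ) : w ∈ cone3 u v w :=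
  ⟨0, 0, 1, le_refl 0, le_refl 0, zero_le_one, by simp⟩

private lemma eval3 (ℓ : (Fin 3 → ℝ) →ₗ[ℝ] ℝ) (u v w t : Fin 3 → ℝ) (a b c : ℝ)
    (h : t = a • u + b • v + c • w) : ℓ t = a * ℓ u + b * ℓ v + c * ℓ w := by
  rw [h, map_add, map_add, map_smul, map_smul, map_smul]; simp [smul_eq_mul]

private lemma cone_le (Ψ : (Fin 3 → ℝ) → ℝ)
    (hconv : ∀ x y : Fin 3 → ℝ, ∀ t : ℝ, 0 ≤ t → t ≤ 1 →
      Ψ (t • x + (1 - t) • y) ≤ t * Ψ x + (1 - t) * Ψ y)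
    (u v w : Fin 3 → ℝ) (ℓ : (Fin 3 → ℝ) →ₗ[ℝ] ℝ)
    (hℓ : ∀ x ∈ cone3 u v w, Ψ x = ℓ x)
    (hspan : ∀ x : Fin 3 → ℝ, ∃ α β γ : ℝ, x = α • u + β • v + γ • w) :
    ∀ x, ℓ x ≤ Ψ x := by
  intro x
  obtain ⟨a, b, c, hx⟩ := hspan x
  set t : ℝ := 1 / (1 + |a| + |b| + |c|) with ht
  have habs : 0 ≤ |a| + |b| + |c| := by positivity
  have ht0 : 0 < t := by positivity
  have htm : t * (1 + |a| + |b| + |c|) = 1 := by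
    rw [ht]; field_simp
  have ht1 : t ≤ 1 := by nlinarith [abs_nonneg a, abs_nonneg b, abs_nonneg c]
  have hp : u + v + w ∈ cone3 u v w := ⟨1, 1, 1, zero_le_one, zero_le_one, zero_le_one, by simp⟩
  have hq : t • x + (1 - t) • (u + v + w) ∈ cone3 u v w := by
    refine ⟨t * a + (1 - t), t * b + (1 - t), t * c + (1 - t), ?_, ?_, ?_, ?_⟩
    · nlinarith [neg_abs_le a, abs_nonneg b, abs_nonneg c]
    · nlinarith [neg_abs_le b, abs_nonneg a, abs_nonneg c]
    · nlinarith [neg_abs_le c, abs_nonneg a, abs_nonneg b]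
    · rw [hx]; module
  have hc := hconv x (u + v + w) t (le_of_lt ht0) ht1
  rw [hℓ _ hq, hℓ _ hp] at hc
  have hlq : ℓ (t • x + (1 - t) • (u + v + w)) = t * ℓ x + (1 - t) * ℓ (u + v + w) := by
    rw [map_add, map_smul, map_smul]; simp [smul_eq_mul]
  rw [hlq] at hc
  have := (mul_le_mul_iff_right₀ ht0).mp (by linarith : t * ℓ x ≤ t * Ψ x)
  exact this

private lemma agree3 (Ψ : (Fin 3 → ℝ) → ℝ) (u v w x : Fin 3 → ℝ)
    (ℓk ℓ : (Fin 3 → ℝ) →ₗ[ℝ] ℝ)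
    (hk : ∀ y ∈ cone3 u v w, Ψ y = ℓk y)
    (hu : ℓ u = ℓk u) (hv : ℓ v = ℓk v) (hw : ℓ w = ℓk w)
    (hx : x ∈ cone3 u v w) : Ψ x = ℓ x := by
  obtain ⟨a, b, c, _, _, _, hxe⟩ := hx
  rw [hk x ⟨a, b, c, ‹_›, ‹_›, ‹_›, hxe⟩, eval3 ℓk u v w x a b c hxe,
    eval3 ℓ u v w x a b c hxe, hu, hv, hw]

private lemma memC1 (x : Fin 3 → ℝ) (h1 : 0 ≤ x 0) (h2 : 0 ≤ x 1) (h3 : 0 ≤ x 2) :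
    x ∈ cone3 ![1,0,0] ![0,1,0] ![0,0,1] := by
  refine ⟨x 0, x 1, x 2, h1, h2, h3, ?_⟩
  funext i; fin_cases i <;> simp <;> ring
private lemma memC2 (x : Fin 3 → ℝ) (h1 : 0 ≤ x 0) (h2 : 0 ≤ x 1 - x 2) (h3 : 0 ≤ -x 2) :
    x ∈ cone3 ![1,0,0] ![0,1,0] ![0,-1,-1] := by
  refine ⟨x 0, x 1 - x 2, -x 2, h1, h2, h3, ?_⟩
  funext i; fin_cases i <;> simp <;> ring
private lemma memC3 (x : Fin 3 → ℝ) (h1 : 0 ≤ x 0 + x 1 - x 2) (h2 : 0 ≤ x 0 - x 2) (h3 : 0 ≤ -x 0) :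
    x ∈ cone3 ![0,1,0] ![0,-1,-1] ![-1,0,-1] := by
  refine ⟨x 0 + x 1 - x 2, x 0 - x 2, -x 0, h1, h2, h3, ?_⟩
  funext i; fin_cases i <;> simp <;> ring
private lemma memC4 (x : Fin 3 → ℝ) (h1 : 0 ≤ x 1) (h2 : 0 ≤ -x 0 + x 2) (h3 : 0 ≤ -x 0) :
    x ∈ cone3 ![0,1,0] ![0,0,1] ![-1,0,-1] := by
  refine ⟨x 1, -x 0 + x 2, -x 0, h1, h2, h3, ?_⟩
  funext i; fin_cases i <;> simp <;> ring
private lemma memC5 (x : Fin 3 → ℝ) (h1 : 0 ≤ -x 0 + 2*x 1 + x 2) (h2 : 0 ≤ -x 0 + 2*x 1) (h3 : 0 ≤ -x 1) :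
    x ∈ cone3 ![0,0,1] ![-1,0,-1] ![-2,-1,0] := by
  refine ⟨-x 0 + 2*x 1 + x 2, -x 0 + 2*x 1, -x 1, h1, h2, h3, ?_⟩
  funext i; fin_cases i <;> simp <;> ring
private lemma memC6 (x : Fin 3 → ℝ) (h1 : 0 ≤ x 0 - 2*x 1) (h2 : 0 ≤ x 2) (h3 : 0 ≤ -x 1) :
    x ∈ cone3 ![1,0,0] ![0,0,1] ![-2,-1,0] := by
  refine ⟨x 0 - 2*x 1, x 2, -x 1, h1, h2, h3, ?_⟩
  funext i; fin_cases i <;> simp <;> ring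
private lemma memC7 (x : Fin 3 → ℝ) (h1 : 0 ≤ x 0 - 2*x 1 + 2*x 2) (h2 : 0 ≤ -x 2) (h3 : 0 ≤ -x 1 + x 2) :
    x ∈ cone3 ![1,0,0] ![0,-1,-1] ![-2,-1,0] := by
  refine ⟨x 0 - 2*x 1 + 2*x 2, -x 2, -x 1 + x 2, h1, h2, h3, ?_⟩
  funext i; fin_cases i <;> simp <;> ring
private lemma memC8 (x : Fin 3 → ℝ) (h1 : 0 ≤ x 0 - x 2) (h2 : 0 ≤ x 1 - x 2) (h3 : 0 ≤ -x 0 - x 1 + x 2) :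
    x ∈ cone3 ![0,-1,-1] ![-1,0,-1] ![-1,-1,-1] := by
  refine ⟨x 0 - x 2, x 1 - x 2, -x 0 - x 1 + x 2, h1, h2, h3, ?_⟩
  funext i; fin_cases i <;> simp <;> ring
private lemma memC9 (x : Fin 3 → ℝ) (h1 : 0 ≤ x 0 - 2*x 1 + x 2) (h2 : 0 ≤ -x 1 + x 2) (h3 : 0 ≤ -x 0 + 2*x 1 - 2*x 2) :
    x ∈ cone3 ![0,-1,-1] ![-2,-1,0] ![-1,-1,-1] := by
  refine ⟨x 0 - 2*x 1 + x 2, -x 1 + x 2, -x 0 + 2*x 1 - 2*x 2, h1, h2, h3, ?_⟩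
  funext i; fin_cases i <;> simp <;> ring
private lemma memC10 (x : Fin 3 → ℝ) (h1 : 0 ≤ -x 0 + 2*x 1) (h2 : 0 ≤ -x 0 + x 1 + x 2) (h3 : 0 ≤ x 0 - 2*x 1 - x 2) :
    x ∈ cone3 ![-1,0,-1] ![-2,-1,0] ![-2,-1,-1] := by
  refine ⟨-x 0 + 2*x 1, -x 0 + x 1 + x 2, x 0 - 2*x 1 - x 2, h1, h2, h3, ?_⟩
  funext i; fin_cases i <;> simp <;> ring
private lemma memC11 (x : Fin 3 → ℝ) (h1 : 0 ≤ x 1 - x 2) (h2 : 0 ≤ x 0 - x 1 - x 2) (h3 : 0 ≤ -x 0 + x 2) :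
    x ∈ cone3 ![-1,0,-1] ![-1,-1,-1] ![-2,-1,-1] := by
  refine ⟨x 1 - x 2, x 0 - x 1 - x 2, -x 0 + x 2, h1, h2, h3, ?_⟩
  funext i; fin_cases i <;> simp <;> ring
private lemma memC12 (x : Fin 3 → ℝ) (h1 : 0 ≤ -x 1 + x 2) (h2 : 0 ≤ x 0 - 2*x 1) (h3 : 0 ≤ -x 0 + 2*x 1 - x 2) :
    x ∈ cone3 ![-2,-1,0] ![-1,-1,-1] ![-2,-1,-1] := by
  refine ⟨-x 1 + x 2, x 0 - 2*x 1, -x 0 + 2*x 1 - x 2, h1, h2, h3, ?_⟩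
  funext i; fin_cases i <;> simp <;> ring

set_option maxHeartbeats 1000000 in
private lemma cover (x : Fin 3 → ℝ) :
    x ∈ cone3 ![1,0,0] ![0,1,0] ![0,0,1] ∨
    x ∈ cone3 ![1,0,0] ![0,1,0] ![0,-1,-1] ∨
    x ∈ cone3 ![0,1,0] ![0,-1,-1] ![-1,0,-1] ∨
    x ∈ cone3 ![0,1,0] ![0,0,1] ![-1,0,-1] ∨
    x ∈ cone3 ![0,0,1] ![-1,0,-1] ![-2,-1,0] ∨
    x ∈ cone3 ![1,0,0] ![0,0,1] ![-2,-1,0] ∨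
    x ∈ cone3 ![1,0,0] ![0,-1,-1] ![-2,-1,0] ∨
    x ∈ cone3 ![0,-1,-1] ![-1,0,-1] ![-1,-1,-1] ∨
    x ∈ cone3 ![0,-1,-1] ![-2,-1,0] ![-1,-1,-1] ∨
    x ∈ cone3 ![-1,0,-1] ![-2,-1,0] ![-2,-1,-1] ∨
    x ∈ cone3 ![-1,0,-1] ![-1,-1,-1] ![-2,-1,-1] ∨
    x ∈ cone3 ![-2,-1,0] ![-1,-1,-1] ![-2,-1,-1] := by
  rcases le_total 0 (x 2) with hc1 | hc1
  · rcases le_total 0 (x 1 - x 2) with hc2 | hc2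
    · rcases le_total 0 (x 0 - 2*x 1 - x 2) with hc3 | hc3
      · exact Or.inl (memC1 x (by linarith) (by linarith) (by linarith))
      · rcases le_total 0 (x 0 - 2*x 1) with hc4 | hc4
        · exact Or.inl (memC1 x (by linarith) (by linarith) (by linarith))
        · rcases le_total 0 (x 0 - 2*x 1 + x 2) with hc5 | hc5
          · exact Or.inl (memC1 x (by linarith) (by linarith) (by linarith))
          · rcases le_total 0 (x 0 - 2*x 1 + 2*x 2) with hc6 | hc6
            · exact Or.inl (memC1 x (by linarith) (by linarith) (by linarith))
            · rcases le_total 0 (x 0 - x 1 - x 2) with hc7 | hc7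
              · exact Or.inl (memC1 x (by linarith) (by linarith) (by linarith))
              · rcases le_total 0 (x 0 - x 2) with hc8 | hc8
                · exact Or.inl (memC1 x (by linarith) (by linarith) (by linarith))
                · rcases le_total 0 (x 0) with hc9 | hc9
                  · exact Or.inl (memC1 x (by linarith) (by linarith) (by linarith))
                  · exact Or.inr (Or.inr (Or.inr (Or.inl (memC4 x (by linarith) (by linarith) (by linarith)))))
    · rcases le_total 0 (x 1) with hc10 | hc10
      · rcases le_total 0 (x 0 - 2*x 1 - x 2) with hc11 | hc11
        · exact Or.inl (memC1 x (by linarith) (by linarith) (by linarith))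
        · rcases le_total 0 (x 0 - 2*x 1) with hc12 | hc12
          · exact Or.inl (memC1 x (by linarith) (by linarith) (by linarith))
          · rcases le_total 0 (x 0 - 2*x 1 + x 2) with hc13 | hc13
            · rcases le_total 0 (x 0 - x 2) with hc14 | hc14
              · exact Or.inl (memC1 x (by linarith) (by linarith) (by linarith))
              · rcases le_total 0 (x 0) with hc15 | hc15
                · exact Or.inl (memC1 x (by linarith) (by linarith) (by linarith))
                · exact Or.inr (Or.inr (Or.inr (Or.inl (memC4 x (by linarith) (by linarith) (by linarith)))))
            · rcases le_total 0 (x 0 - 2*x 1 + 2*x 2) with hc16 | hc16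
              · rcases le_total 0 (x 0) with hc17 | hc17
                · exact Or.inl (memC1 x (by linarith) (by linarith) (by linarith))
                · exact Or.inr (Or.inr (Or.inr (Or.inl (memC4 x (by linarith) (by linarith) (by linarith)))))
              · exact Or.inr (Or.inr (Or.inr (Or.inl (memC4 x (by linarith) (by linarith) (by linarith)))))
      · rcases le_total 0 (x 0 - 2*x 1 - x 2) with hc18 | hc18
        · exact Or.inr (Or.inr (Or.inr (Or.inr (Or.inr (Or.inl (memC6 x (by linarith) (by linarith) (by linarith)))))))
        · rcases le_total 0 (x 0 - 2*x 1) with hc19 | hc19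
          · exact Or.inr (Or.inr (Or.inr (Or.inr (Or.inr (Or.inl (memC6 x (by linarith) (by linarith) (by linarith)))))))
          · exact Or.inr (Or.inr (Or.inr (Or.inr (Or.inl (memC5 x (by linarith) (by linarith) (by linarith))))))
  · rcases le_total 0 (x 1 - x 2) with hc20 | hc20
    · rcases le_total 0 (x 1) with hc21 | hc21
      · rcases le_total 0 (x 0 - 2*x 1 - x 2) with hc22 | hc22
        · rcases le_total 0 (x 0 - 2*x 1) with hc23 | hc23
          · exact Or.inr (Or.inl (memC2 x (by linarith) (by linarith) (by linarith)))
          · rcases le_total 0 (x 0) with hc24 | hc24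
            · exact Or.inr (Or.inl (memC2 x (by linarith) (by linarith) (by linarith)))
            · exact Or.inr (Or.inr (Or.inl (memC3 x (by linarith) (by linarith) (by linarith))))
        · rcases le_total 0 (x 0 - x 1 - x 2) with hc25 | hc25
          · rcases le_total 0 (x 0) with hc26 | hc26
            · exact Or.inr (Or.inl (memC2 x (by linarith) (by linarith) (by linarith)))
            · exact Or.inr (Or.inr (Or.inl (memC3 x (by linarith) (by linarith) (by linarith))))
          · rcases le_total 0 (x 0 - x 2) with hc27 | hc27
            · rcases le_total 0 (x 0) with hc28 | hc28
              · exact Or.inr (Or.inl (memC2 x (by linarith) (by linarith) (by linarith)))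
              · exact Or.inr (Or.inr (Or.inl (memC3 x (by linarith) (by linarith) (by linarith))))
            · exact Or.inr (Or.inr (Or.inr (Or.inl (memC4 x (by linarith) (by linarith) (by linarith)))))
      · rcases le_total 0 (x 0 - 2*x 1 - x 2) with hc29 | hc29
        · rcases le_total 0 (x 0 - 2*x 1) with hc30 | hc30
          · rcases le_total 0 (x 0 - 2*x 1 + x 2) with hc31 | hc31
            · rcases le_total 0 (x 0 - 2*x 1 + 2*x 2) with hc32 | hc32
              · exact Or.inr (Or.inl (memC2 x (by linarith) (by linarith) (by linarith)))
              · rcases le_total 0 (x 0) with hc33 | hc33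
                · exact Or.inr (Or.inl (memC2 x (by linarith) (by linarith) (by linarith)))
                · rcases le_total 0 (x 0 + x 1 - x 2) with hc34 | hc34
                  · exact Or.inr (Or.inr (Or.inl (memC3 x (by linarith) (by linarith) (by linarith))))
                  · exact Or.inr (Or.inr (Or.inr (Or.inr (Or.inr (Or.inr (Or.inr (Or.inl (memC8 x (by linarith) (by linarith) (by linarith)))))))))
            · rcases le_total 0 (x 0 - x 2) with hc35 | hc35
              · rcases le_total 0 (x 0) with hc36 | hc36
                · exact Or.inr (Or.inl (memC2 x (by linarith) (by linarith) (by linarith)))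
                · rcases le_total 0 (x 0 + x 1 - x 2) with hc37 | hc37
                  · exact Or.inr (Or.inr (Or.inl (memC3 x (by linarith) (by linarith) (by linarith))))
                  · exact Or.inr (Or.inr (Or.inr (Or.inr (Or.inr (Or.inr (Or.inr (Or.inl (memC8 x (by linarith) (by linarith) (by linarith)))))))))
              · exact Or.inr (Or.inr (Or.inr (Or.inr (Or.inr (Or.inr (Or.inr (Or.inr (Or.inr (Or.inr (Or.inl (memC11 x (by linarith) (by linarith) (by linarith))))))))))))
          · rcases le_total 0 (x 0 - x 1 - x 2) with hc38 | hc38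
            · rcases le_total 0 (x 0 - x 2) with hc39 | hc39
              · rcases le_total 0 (x 0 + x 1 - x 2) with hc40 | hc40
                · exact Or.inr (Or.inr (Or.inl (memC3 x (by linarith) (by linarith) (by linarith))))
                · exact Or.inr (Or.inr (Or.inr (Or.inr (Or.inr (Or.inr (Or.inr (Or.inl (memC8 x (by linarith) (by linarith) (by linarith)))))))))
              · exact Or.inr (Or.inr (Or.inr (Or.inr (Or.inr (Or.inr (Or.inr (Or.inr (Or.inr (Or.inr (Or.inl (memC11 x (by linarith) (by linarith) (by linarith))))))))))))
            · exact Or.inr (Or.inr (Or.inr (Or.inr (Or.inr (Or.inr (Or.inr (Or.inr (Or.inr (Or.inl (memC10 x (by linarith) (by linarith) (by linarith)))))))))))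
        · exact Or.inr (Or.inr (Or.inr (Or.inr (Or.inl (memC5 x (by linarith) (by linarith) (by linarith))))))
    · rcases le_total 0 (x 0 - 2*x 1 - x 2) with hc41 | hc41
      · rcases le_total 0 (x 0 - 2*x 1) with hc42 | hc42
        · rcases le_total 0 (x 0 - 2*x 1 + x 2) with hc43 | hc43
          · rcases le_total 0 (x 0 - 2*x 1 + 2*x 2) with hc44 | hc44
            · exact Or.inr (Or.inr (Or.inr (Or.inr (Or.inr (Or.inr (Or.inl (memC7 x (by linarith) (by linarith) (by linarith))))))))
            · exact Or.inr (Or.inr (Or.inr (Or.inr (Or.inr (Or.inr (Or.inr (Or.inr (Or.inl (memC9 x (by linarith) (by linarith) (by linarith))))))))))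
          · exact Or.inr (Or.inr (Or.inr (Or.inr (Or.inr (Or.inr (Or.inr (Or.inr (Or.inr (Or.inr (Or.inr (memC12 x (by linarith) (by linarith) (by linarith))))))))))))
        · exact Or.inr (Or.inr (Or.inr (Or.inr (Or.inr (Or.inr (Or.inr (Or.inr (Or.inr (Or.inl (memC10 x (by linarith) (by linarith) (by linarith)))))))))))
      · exact Or.inr (Or.inr (Or.inr (Or.inr (Or.inl (memC5 x (by linarith) (by linarith) (by linarith))))))
set_option maxHeartbeats 1000000 in
theorem stmt0 (Ψ : (Fin 3 → ℝ) → ℝ)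
    (hconv : ∀ x y : Fin 3 → ℝ, ∀ t : ℝ, 0 ≤ t → t ≤ 1 →
      Ψ (t • x + (1 - t) • y) ≤ t * Ψ x + (1 - t) * Ψ y)
    (h1 : ∃ ℓ : (Fin 3 → ℝ) →ₗ[ℝ] ℝ, ∀ x ∈ cone3 ![1,0,0] ![0,1,0] ![0,0,1], Ψ x = ℓ x)
    (h2 : ∃ ℓ : (Fin 3 → ℝ) →ₗ[ℝ] ℝ, ∀ x ∈ cone3 ![1,0,0] ![0,1,0] ![0,-1,-1], Ψ x = ℓ x)
    (h3 : ∃ ℓ : (Fin 3 → ℝ) →ₗ[ℝ] ℝ, ∀ x ∈ cone3 ![0,1,0] ![0,-1,-1] ![-1,0,-1], Ψ x = ℓ x)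
    (h4 : ∃ ℓ : (Fin 3 → ℝ) →ₗ[ℝ] ℝ, ∀ x ∈ cone3 ![0,1,0] ![0,0,1] ![-1,0,-1], Ψ x = ℓ x)
    (h5 : ∃ ℓ : (Fin 3 → ℝ) →ₗ[ℝ] ℝ, ∀ x ∈ cone3 ![0,0,1] ![-1,0,-1] ![-2,-1,0], Ψ x = ℓ x)
    (h6 : ∃ ℓ : (Fin 3 → ℝ) →ₗ[ℝ] ℝ, ∀ x ∈ cone3 ![1,0,0] ![0,0,1] ![-2,-1,0], Ψ x = ℓ x)
    (h7 : ∃ ℓ : (Fin 3 → ℝ) →ₗ[ℝ] ℝ, ∀ x ∈ cone3 ![1,0,0] ![0,-1,-1] ![-2,-1,0], Ψ x = ℓ x)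
    (h8 : ∃ ℓ : (Fin 3 → ℝ) →ₗ[ℝ] ℝ, ∀ x ∈ cone3 ![0,-1,-1] ![-1,0,-1] ![-1,-1,-1], Ψ x = ℓ x)
    (h9 : ∃ ℓ : (Fin 3 → ℝ) →ₗ[ℝ] ℝ, ∀ x ∈ cone3 ![0,-1,-1] ![-2,-1,0] ![-1,-1,-1], Ψ x = ℓ x)
    (h10 : ∃ ℓ : (Fin 3 → ℝ) →ₗ[ℝ] ℝ, ∀ x ∈ cone3 ![-1,0,-1] ![-2,-1,0] ![-2,-1,-1], Ψ x = ℓ x)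
    (h11 : ∃ ℓ : (Fin 3 → ℝ) →ₗ[ℝ] ℝ, ∀ x ∈ cone3 ![-1,0,-1] ![-1,-1,-1] ![-2,-1,-1], Ψ x = ℓ x)
    (h12 : ∃ ℓ : (Fin 3 → ℝ) →ₗ[ℝ] ℝ, ∀ x ∈ cone3 ![-2,-1,0] ![-1,-1,-1] ![-2,-1,-1], Ψ x = ℓ x) :
    ∃ ℓ : (Fin 3 → ℝ) →ₗ[ℝ] ℝ, ∀ x : Fin 3 → ℝ, Ψ x = ℓ x := by
  obtain ⟨ℓ1, hℓ1⟩ := h1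
  obtain ⟨ℓ2, hℓ2⟩ := h2
  obtain ⟨ℓ3, hℓ3⟩ := h3
  obtain ⟨ℓ4, hℓ4⟩ := h4
  obtain ⟨ℓ5, hℓ5⟩ := h5
  obtain ⟨ℓ6, hℓ6⟩ := h6
  obtain ⟨ℓ7, hℓ7⟩ := h7
  obtain ⟨ℓ8, hℓ8⟩ := h8
  obtain ⟨ℓ9, hℓ9⟩ := h9
  obtain ⟨ℓ10, hℓ10⟩ := h10
  obtain ⟨ℓ11, hℓ11⟩ := h11
  obtain ⟨ℓ12, hℓ12⟩ := h12
  have e1_1 : Ψ ![1,0,0] = ℓ1 ![1,0,0] := hℓ1 _ (memg1 ![1,0,0] ![0,1,0] ![0,0,1])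
  have e1_2 : Ψ ![0,1,0] = ℓ1 ![0,1,0] := hℓ1 _ (memg2 ![1,0,0] ![0,1,0] ![0,0,1])
  have e1_3 : Ψ ![0,0,1] = ℓ1 ![0,0,1] := hℓ1 _ (memg3 ![1,0,0] ![0,1,0] ![0,0,1])
  have e2_1 : Ψ ![1,0,0] = ℓ2 ![1,0,0] := hℓ2 _ (memg1 ![1,0,0] ![0,1,0] ![0,-1,-1])
  have e2_2 : Ψ ![0,1,0] = ℓ2 ![0,1,0] := hℓ2 _ (memg2 ![1,0,0] ![0,1,0] ![0,-1,-1])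
  have e2_4 : Ψ ![0,-1,-1] = ℓ2 ![0,-1,-1] := hℓ2 _ (memg3 ![1,0,0] ![0,1,0] ![0,-1,-1])
  have e3_2 : Ψ ![0,1,0] = ℓ3 ![0,1,0] := hℓ3 _ (memg1 ![0,1,0] ![0,-1,-1] ![-1,0,-1])
  have e3_4 : Ψ ![0,-1,-1] = ℓ3 ![0,-1,-1] := hℓ3 _ (memg2 ![0,1,0] ![0,-1,-1] ![-1,0,-1])
  have e3_5 : Ψ ![-1,0,-1] = ℓ3 ![-1,0,-1] := hℓ3 _ (memg3 ![0,1,0] ![0,-1,-1] ![-1,0,-1])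
  have e4_2 : Ψ ![0,1,0] = ℓ4 ![0,1,0] := hℓ4 _ (memg1 ![0,1,0] ![0,0,1] ![-1,0,-1])
  have e4_3 : Ψ ![0,0,1] = ℓ4 ![0,0,1] := hℓ4 _ (memg2 ![0,1,0] ![0,0,1] ![-1,0,-1])
  have e4_5 : Ψ ![-1,0,-1] = ℓ4 ![-1,0,-1] := hℓ4 _ (memg3 ![0,1,0] ![0,0,1] ![-1,0,-1])
  have e5_3 : Ψ ![0,0,1] = ℓ5 ![0,0,1] := hℓ5 _ (memg1 ![0,0,1] ![-1,0,-1] ![-2,-1,0])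
  have e5_5 : Ψ ![-1,0,-1] = ℓ5 ![-1,0,-1] := hℓ5 _ (memg2 ![0,0,1] ![-1,0,-1] ![-2,-1,0])
  have e5_6 : Ψ ![-2,-1,0] = ℓ5 ![-2,-1,0] := hℓ5 _ (memg3 ![0,0,1] ![-1,0,-1] ![-2,-1,0])
  have e6_1 : Ψ ![1,0,0] = ℓ6 ![1,0,0] := hℓ6 _ (memg1 ![1,0,0] ![0,0,1] ![-2,-1,0])
  have e6_3 : Ψ ![0,0,1] = ℓ6 ![0,0,1] := hℓ6 _ (memg2 ![1,0,0] ![0,0,1] ![-2,-1,0])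
  have e6_6 : Ψ ![-2,-1,0] = ℓ6 ![-2,-1,0] := hℓ6 _ (memg3 ![1,0,0] ![0,0,1] ![-2,-1,0])
  have e7_1 : Ψ ![1,0,0] = ℓ7 ![1,0,0] := hℓ7 _ (memg1 ![1,0,0] ![0,-1,-1] ![-2,-1,0])
  have e7_4 : Ψ ![0,-1,-1] = ℓ7 ![0,-1,-1] := hℓ7 _ (memg2 ![1,0,0] ![0,-1,-1] ![-2,-1,0])
  have e7_6 : Ψ ![-2,-1,0] = ℓ7 ![-2,-1,0] := hℓ7 _ (memg3 ![1,0,0] ![0,-1,-1] ![-2,-1,0])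
  have e8_4 : Ψ ![0,-1,-1] = ℓ8 ![0,-1,-1] := hℓ8 _ (memg1 ![0,-1,-1] ![-1,0,-1] ![-1,-1,-1])
  have e8_5 : Ψ ![-1,0,-1] = ℓ8 ![-1,0,-1] := hℓ8 _ (memg2 ![0,-1,-1] ![-1,0,-1] ![-1,-1,-1])
  have e8_7 : Ψ ![-1,-1,-1] = ℓ8 ![-1,-1,-1] := hℓ8 _ (memg3 ![0,-1,-1] ![-1,0,-1] ![-1,-1,-1])
  have e9_4 : Ψ ![0,-1,-1] = ℓ9 ![0,-1,-1] := hℓ9 _ (memg1 ![0,-1,-1] ![-2,-1,0] ![-1,-1,-1])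
  have e9_6 : Ψ ![-2,-1,0] = ℓ9 ![-2,-1,0] := hℓ9 _ (memg2 ![0,-1,-1] ![-2,-1,0] ![-1,-1,-1])
  have e9_7 : Ψ ![-1,-1,-1] = ℓ9 ![-1,-1,-1] := hℓ9 _ (memg3 ![0,-1,-1] ![-2,-1,0] ![-1,-1,-1])
  have e10_5 : Ψ ![-1,0,-1] = ℓ10 ![-1,0,-1] := hℓ10 _ (memg1 ![-1,0,-1] ![-2,-1,0] ![-2,-1,-1])
  have e10_6 : Ψ ![-2,-1,0] = ℓ10 ![-2,-1,0] := hℓ10 _ (memg2 ![-1,0,-1] ![-2,-1,0] ![-2,-1,-1])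
  have e10_8 : Ψ ![-2,-1,-1] = ℓ10 ![-2,-1,-1] := hℓ10 _ (memg3 ![-1,0,-1] ![-2,-1,0] ![-2,-1,-1])
  have e11_5 : Ψ ![-1,0,-1] = ℓ11 ![-1,0,-1] := hℓ11 _ (memg1 ![-1,0,-1] ![-1,-1,-1] ![-2,-1,-1])
  have e11_7 : Ψ ![-1,-1,-1] = ℓ11 ![-1,-1,-1] := hℓ11 _ (memg2 ![-1,0,-1] ![-1,-1,-1] ![-2,-1,-1])
  have e11_8 : Ψ ![-2,-1,-1] = ℓ11 ![-2,-1,-1] := hℓ11 _ (memg3 ![-1,0,-1] ![-1,-1,-1] ![-2,-1,-1])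
  have e12_6 : Ψ ![-2,-1,0] = ℓ12 ![-2,-1,0] := hℓ12 _ (memg1 ![-2,-1,0] ![-1,-1,-1] ![-2,-1,-1])
  have e12_7 : Ψ ![-1,-1,-1] = ℓ12 ![-1,-1,-1] := hℓ12 _ (memg2 ![-2,-1,0] ![-1,-1,-1] ![-2,-1,-1])
  have e12_8 : Ψ ![-2,-1,-1] = ℓ12 ![-2,-1,-1] := hℓ12 _ (memg3 ![-2,-1,0] ![-1,-1,-1] ![-2,-1,-1])
  have hs2 : ∀ x : Fin 3 → ℝ, ∃ α β γ : ℝ, x = α • (![1,0,0] : Fin 3 → ℝ) + β • ![0,1,0] + γ • ![0,-1,-1] :=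
    fun x => ⟨x 0, x 1 - x 2, -x 2, by funext i; fin_cases i <;> simp <;> ring⟩
  have hb2 : ∀ y, ℓ2 y ≤ Ψ y := cone_le Ψ hconv _ _ _ ℓ2 hℓ2 hs2
  have hs3 : ∀ x : Fin 3 → ℝ, ∃ α β γ : ℝ, x = α • (![0,1,0] : Fin 3 → ℝ) + β • ![0,-1,-1] + γ • ![-1,0,-1] :=
    fun x => ⟨x 0 + x 1 - x 2, x 0 - x 2, -x 0, by funext i; fin_cases i <;> simp <;> ring⟩
  have hb3 : ∀ y, ℓ3 y ≤ Ψ y := cone_le Ψ hconv _ _ _ ℓ3 hℓ3 hs3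
  have hs4 : ∀ x : Fin 3 → ℝ, ∃ α β γ : ℝ, x = α • (![0,1,0] : Fin 3 → ℝ) + β • ![0,0,1] + γ • ![-1,0,-1] :=
    fun x => ⟨x 1, -x 0 + x 2, -x 0, by funext i; fin_cases i <;> simp <;> ring⟩
  have hb4 : ∀ y, ℓ4 y ≤ Ψ y := cone_le Ψ hconv _ _ _ ℓ4 hℓ4 hs4
  have hs5 : ∀ x : Fin 3 → ℝ, ∃ α β γ : ℝ, x = α • (![0,0,1] : Fin 3 → ℝ) + β • ![-1,0,-1] + γ • ![-2,-1,0] :=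
    fun x => ⟨-x 0 + 2*x 1 + x 2, -x 0 + 2*x 1, -x 1, by funext i; fin_cases i <;> simp <;> ring⟩
  have hb5 : ∀ y, ℓ5 y ≤ Ψ y := cone_le Ψ hconv _ _ _ ℓ5 hℓ5 hs5
  have hs6 : ∀ x : Fin 3 → ℝ, ∃ α β γ : ℝ, x = α • (![1,0,0] : Fin 3 → ℝ) + β • ![0,0,1] + γ • ![-2,-1,0] :=
    fun x => ⟨x 0 - 2*x 1, x 2, -x 1, by funext i; fin_cases i <;> simp <;> ring⟩
  have hb6 : ∀ y, ℓ6 y ≤ Ψ y := cone_le Ψ hconv _ _ _ ℓ6 hℓ6 hs6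
  have hs7 : ∀ x : Fin 3 → ℝ, ∃ α β γ : ℝ, x = α • (![1,0,0] : Fin 3 → ℝ) + β • ![0,-1,-1] + γ • ![-2,-1,0] :=
    fun x => ⟨x 0 - 2*x 1 + 2*x 2, -x 2, -x 1 + x 2, by funext i; fin_cases i <;> simp <;> ring⟩
  have hb7 : ∀ y, ℓ7 y ≤ Ψ y := cone_le Ψ hconv _ _ _ ℓ7 hℓ7 hs7
  have hs8 : ∀ x : Fin 3 → ℝ, ∃ α β γ : ℝ, x = α • (![0,-1,-1] : Fin 3 → ℝ) + β • ![-1,0,-1] + γ • ![-1,-1,-1] :=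
    fun x => ⟨x 0 - x 2, x 1 - x 2, -x 0 - x 1 + x 2, by funext i; fin_cases i <;> simp <;> ring⟩
  have hb8 : ∀ y, ℓ8 y ≤ Ψ y := cone_le Ψ hconv _ _ _ ℓ8 hℓ8 hs8
  have hs10 : ∀ x : Fin 3 → ℝ, ∃ α β γ : ℝ, x = α • (![-1,0,-1] : Fin 3 → ℝ) + β • ![-2,-1,0] + γ • ![-2,-1,-1] :=
    fun x => ⟨-x 0 + 2*x 1, -x 0 + x 1 + x 2, x 0 - 2*x 1 - x 2, by funext i; fin_cases i <;> simp <;> ring⟩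
  have hb10 : ∀ y, ℓ10 y ≤ Ψ y := cone_le Ψ hconv _ _ _ ℓ10 hℓ10 hs10
  have hs11 : ∀ x : Fin 3 → ℝ, ∃ α β γ : ℝ, x = α • (![-1,0,-1] : Fin 3 → ℝ) + β • ![-1,-1,-1] + γ • ![-2,-1,-1] :=
    fun x => ⟨x 1 - x 2, x 0 - x 1 - x 2, -x 0 + x 2, by funext i; fin_cases i <;> simp <;> ring⟩
  have hb11 : ∀ y, ℓ11 y ≤ Ψ y := cone_le Ψ hconv _ _ _ ℓ11 hℓ11 hs11
  have wA : (0 : ℝ) * Ψ ![1,0,0] + (-1 : ℝ) * Ψ ![0,1,0] + (-1 : ℝ) * Ψ ![0,-1,-1] ≤ Ψ ![0,0,1] := by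
    have hd : (![0,0,1] : Fin 3 → ℝ) = (0 : ℝ) • ![1,0,0] + (-1 : ℝ) • ![0,1,0] + (-1 : ℝ) • ![0,-1,-1] := by
      funext i; fin_cases i <;> simp <;> ring
    have := eval3 ℓ2 ![1,0,0] ![0,1,0] ![0,-1,-1] ![0,0,1] (0 : ℝ) (-1 : ℝ) (-1 : ℝ) hd
    rw [← e2_1, ← e2_2, ← e2_4] at this
    linarith only [hb2 ![0,0,1], this]
  have wB : (1 : ℝ) * Ψ ![0,1,0] + (1 : ℝ) * Ψ ![0,-1,-1] + (-1 : ℝ) * Ψ ![-1,0,-1] ≤ Ψ ![1,0,0] := by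
    have hd : (![1,0,0] : Fin 3 → ℝ) = (1 : ℝ) • ![0,1,0] + (1 : ℝ) • ![0,-1,-1] + (-1 : ℝ) • ![-1,0,-1] := by
      funext i; fin_cases i <;> simp <;> ring
    have := eval3 ℓ3 ![0,1,0] ![0,-1,-1] ![-1,0,-1] ![1,0,0] (1 : ℝ) (1 : ℝ) (-1 : ℝ) hd
    rw [← e3_2, ← e3_4, ← e3_5] at this
    linarith only [hb3 ![1,0,0], this]
  have wC : (2 : ℝ) * Ψ ![0,0,1] + (2 : ℝ) * Ψ ![-1,0,-1] + (-1 : ℝ) * Ψ ![-2,-1,0] ≤ Ψ ![0,1,0] := by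
    have hd : (![0,1,0] : Fin 3 → ℝ) = (2 : ℝ) • ![0,0,1] + (2 : ℝ) • ![-1,0,-1] + (-1 : ℝ) • ![-2,-1,0] := by
      funext i; fin_cases i <;> simp <;> ring
    have := eval3 ℓ5 ![0,0,1] ![-1,0,-1] ![-2,-1,0] ![0,1,0] (2 : ℝ) (2 : ℝ) (-1 : ℝ) hd
    rw [← e5_3, ← e5_5, ← e5_6] at this
    linarith only [hb5 ![0,1,0], this]
  have wD : (2 : ℝ) * Ψ ![1,0,0] + (-1 : ℝ) * Ψ ![0,-1,-1] + (1 : ℝ) * Ψ ![-2,-1,0] ≤ Ψ ![0,0,1] := by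
    have hd : (![0,0,1] : Fin 3 → ℝ) = (2 : ℝ) • ![1,0,0] + (-1 : ℝ) • ![0,-1,-1] + (1 : ℝ) • ![-2,-1,0] := by
      funext i; fin_cases i <;> simp <;> ring
    have := eval3 ℓ7 ![1,0,0] ![0,-1,-1] ![-2,-1,0] ![0,0,1] (2 : ℝ) (-1 : ℝ) (1 : ℝ) hd
    rw [← e7_1, ← e7_4, ← e7_6] at this
    linarith only [hb7 ![0,0,1], this]
  have wE : (0 : ℝ) * Ψ ![0,1,0] + (-1 : ℝ) * Ψ ![0,0,1] + (-1 : ℝ) * Ψ ![-1,0,-1] ≤ Ψ ![1,0,0] := by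
    have hd : (![1,0,0] : Fin 3 → ℝ) = (0 : ℝ) • ![0,1,0] + (-1 : ℝ) • ![0,0,1] + (-1 : ℝ) • ![-1,0,-1] := by
      funext i; fin_cases i <;> simp <;> ring
    have := eval3 ℓ4 ![0,1,0] ![0,0,1] ![-1,0,-1] ![1,0,0] (0 : ℝ) (-1 : ℝ) (-1 : ℝ) hd
    rw [← e4_2, ← e4_3, ← e4_5] at this
    linarith only [hb4 ![1,0,0], this]
  have wF : (-2 : ℝ) * Ψ ![1,0,0] + (0 : ℝ) * Ψ ![0,0,1] + (-1 : ℝ) * Ψ ![-2,-1,0] ≤ Ψ ![0,1,0] := by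
    have hd : (![0,1,0] : Fin 3 → ℝ) = (-2 : ℝ) • ![1,0,0] + (0 : ℝ) • ![0,0,1] + (-1 : ℝ) • ![-2,-1,0] := by
      funext i; fin_cases i <;> simp <;> ring
    have := eval3 ℓ6 ![1,0,0] ![0,0,1] ![-2,-1,0] ![0,1,0] (-2 : ℝ) (0 : ℝ) (-1 : ℝ) hd
    rw [← e6_1, ← e6_3, ← e6_6] at this
    linarith only [hb6 ![0,1,0], this]
  have wG : (-2 : ℝ) * Ψ ![0,-1,-1] + (-1 : ℝ) * Ψ ![-1,0,-1] + (3 : ℝ) * Ψ ![-1,-1,-1] ≤ Ψ ![-2,-1,0] := by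
    have hd : (![-2,-1,0] : Fin 3 → ℝ) = (-2 : ℝ) • ![0,-1,-1] + (-1 : ℝ) • ![-1,0,-1] + (3 : ℝ) • ![-1,-1,-1] := by
      funext i; fin_cases i <;> simp <;> ring
    have := eval3 ℓ8 ![0,-1,-1] ![-1,0,-1] ![-1,-1,-1] ![-2,-1,0] (-2 : ℝ) (-1 : ℝ) (3 : ℝ) hd
    rw [← e8_4, ← e8_5, ← e8_7] at this
    linarith only [hb8 ![-2,-1,0], this]
  have wH : (-1 : ℝ) * Ψ ![0,1,0] + (0 : ℝ) * Ψ ![0,-1,-1] + (1 : ℝ) * Ψ ![-1,0,-1] ≤ Ψ ![-1,-1,-1] := by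
    have hd : (![-1,-1,-1] : Fin 3 → ℝ) = (-1 : ℝ) • ![0,1,0] + (0 : ℝ) • ![0,-1,-1] + (1 : ℝ) • ![-1,0,-1] := by
      funext i; fin_cases i <;> simp <;> ring
    have := eval3 ℓ3 ![0,1,0] ![0,-1,-1] ![-1,0,-1] ![-1,-1,-1] (-1 : ℝ) (0 : ℝ) (1 : ℝ) hd
    rw [← e3_2, ← e3_4, ← e3_5] at this
    linarith only [hb3 ![-1,-1,-1], this]
  have wI : (0 : ℝ) * Ψ ![-1,0,-1] + (2 : ℝ) * Ψ ![-1,-1,-1] + (-1 : ℝ) * Ψ ![-2,-1,-1] ≤ Ψ ![0,-1,-1] := by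
    have hd : (![0,-1,-1] : Fin 3 → ℝ) = (0 : ℝ) • ![-1,0,-1] + (2 : ℝ) • ![-1,-1,-1] + (-1 : ℝ) • ![-2,-1,-1] := by
      funext i; fin_cases i <;> simp <;> ring
    have := eval3 ℓ11 ![-1,0,-1] ![-1,-1,-1] ![-2,-1,-1] ![0,-1,-1] (0 : ℝ) (2 : ℝ) (-1 : ℝ) hd
    rw [← e11_5, ← e11_7, ← e11_8] at this
    linarith only [hb11 ![0,-1,-1], this]
  have wJ : (-1 : ℝ) * Ψ ![-1,0,-1] + (-1 : ℝ) * Ψ ![-2,-1,0] + (2 : ℝ) * Ψ ![-2,-1,-1] ≤ Ψ ![-1,-1,-1] := by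
    have hd : (![-1,-1,-1] : Fin 3 → ℝ) = (-1 : ℝ) • ![-1,0,-1] + (-1 : ℝ) • ![-2,-1,0] + (2 : ℝ) • ![-2,-1,-1] := by
      funext i; fin_cases i <;> simp <;> ring
    have := eval3 ℓ10 ![-1,0,-1] ![-2,-1,0] ![-2,-1,-1] ![-1,-1,-1] (-1 : ℝ) (-1 : ℝ) (2 : ℝ) hd
    rw [← e10_5, ← e10_6, ← e10_8] at this
    linarith only [hb10 ![-1,-1,-1], this]
  have p4 : Ψ ![0,-1,-1] = -Ψ ![0,1,0] - Ψ ![0,0,1] := by linarith only [wA,wB,wC,wD,wE,wF]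
  have p5 : Ψ ![-1,0,-1] = -Ψ ![1,0,0] - Ψ ![0,0,1] := by linarith only [wA,wB,wC,wD,wE,wF]
  have p6 : Ψ ![-2,-1,0] = -2*Ψ ![1,0,0] - Ψ ![0,1,0] := by linarith only [wA,wB,wC,wD,wE,wF]
  have p7 : Ψ ![-1,-1,-1] = -Ψ ![1,0,0] - Ψ ![0,1,0] - Ψ ![0,0,1] := by linarith only [wA,wB,wC,wD,wE,wF,wG,wH]
  have p8 : Ψ ![-2,-1,-1] = -2*Ψ ![1,0,0] - Ψ ![0,1,0] - Ψ ![0,0,1] := by linarith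
  have l1 : ℓ1 ![1,0,0] = Ψ ![1,0,0] := (e1_1).symm
  have l2 : ℓ1 ![0,1,0] = Ψ ![0,1,0] := (e1_2).symm
  have l3 : ℓ1 ![0,0,1] = Ψ ![0,0,1] := (e1_3).symm
  have l4 : ℓ1 ![0,-1,-1] = Ψ ![0,-1,-1] := by
    have hd : (![0,-1,-1] : Fin 3 → ℝ) = (0 : ℝ) • ![1,0,0] + (-1 : ℝ) • ![0,1,0] + (-1 : ℝ) • ![0,0,1] := by
      funext i; fin_cases i <;> simp <;> ring
    rw [eval3 ℓ1 ![1,0,0] ![0,1,0] ![0,0,1] ![0,-1,-1] (0 : ℝ) (-1 : ℝ) (-1 : ℝ) hd, ← e1_1, ← e1_2, ← e1_3]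
    linarith only [p4,p5,p6,p7,p8]
  have l5 : ℓ1 ![-1,0,-1] = Ψ ![-1,0,-1] := by
    have hd : (![-1,0,-1] : Fin 3 → ℝ) = (-1 : ℝ) • ![1,0,0] + (0 : ℝ) • ![0,1,0] + (-1 : ℝ) • ![0,0,1] := by
      funext i; fin_cases i <;> simp <;> ring
    rw [eval3 ℓ1 ![1,0,0] ![0,1,0] ![0,0,1] ![-1,0,-1] (-1 : ℝ) (0 : ℝ) (-1 : ℝ) hd, ← e1_1, ← e1_2, ← e1_3]
    linarith only [p4,p5,p6,p7,p8]
  have l6 : ℓ1 ![-2,-1,0] = Ψ ![-2,-1,0] := by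
    have hd : (![-2,-1,0] : Fin 3 → ℝ) = (-2 : ℝ) • ![1,0,0] + (-1 : ℝ) • ![0,1,0] + (0 : ℝ) • ![0,0,1] := by
      funext i; fin_cases i <;> simp <;> ring
    rw [eval3 ℓ1 ![1,0,0] ![0,1,0] ![0,0,1] ![-2,-1,0] (-2 : ℝ) (-1 : ℝ) (0 : ℝ) hd, ← e1_1, ← e1_2, ← e1_3]
    linarith only [p4,p5,p6,p7,p8]
  have l7 : ℓ1 ![-1,-1,-1] = Ψ ![-1,-1,-1] := by
    have hd : (![-1,-1,-1] : Fin 3 → ℝ) = (-1 : ℝ) • ![1,0,0] + (-1 : ℝ) • ![0,1,0] + (-1 : ℝ) • ![0,0,1] := by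
      funext i; fin_cases i <;> simp <;> ring
    rw [eval3 ℓ1 ![1,0,0] ![0,1,0] ![0,0,1] ![-1,-1,-1] (-1 : ℝ) (-1 : ℝ) (-1 : ℝ) hd, ← e1_1, ← e1_2, ← e1_3]
    linarith only [p4,p5,p6,p7,p8]
  have l8 : ℓ1 ![-2,-1,-1] = Ψ ![-2,-1,-1] := by
    have hd : (![-2,-1,-1] : Fin 3 → ℝ) = (-2 : ℝ) • ![1,0,0] + (-1 : ℝ) • ![0,1,0] + (-1 : ℝ) • ![0,0,1] := by
      funext i; fin_cases i <;> simp <;> ring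
    rw [eval3 ℓ1 ![1,0,0] ![0,1,0] ![0,0,1] ![-2,-1,-1] (-2 : ℝ) (-1 : ℝ) (-1 : ℝ) hd, ← e1_1, ← e1_2, ← e1_3]
    linarith only [p4,p5,p6,p7,p8]
  have done1 : ∀ x ∈ cone3 ![1,0,0] ![0,1,0] ![0,0,1], Ψ x = ℓ1 x := fun x hx =>
    agree3 Ψ ![1,0,0] ![0,1,0] ![0,0,1] x ℓ1 ℓ1 hℓ1 (l1.trans e1_1) (l2.trans e1_2) (l3.trans e1_3) hx
  have done2 : ∀ x ∈ cone3 ![1,0,0] ![0,1,0] ![0,-1,-1], Ψ x = ℓ1 x := fun x hx =>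
    agree3 Ψ ![1,0,0] ![0,1,0] ![0,-1,-1] x ℓ2 ℓ1 hℓ2 (l1.trans e2_1) (l2.trans e2_2) (l4.trans e2_4) hx
  have done3 : ∀ x ∈ cone3 ![0,1,0] ![0,-1,-1] ![-1,0,-1], Ψ x = ℓ1 x := fun x hx =>
    agree3 Ψ ![0,1,0] ![0,-1,-1] ![-1,0,-1] x ℓ3 ℓ1 hℓ3 (l2.trans e3_2) (l4.trans e3_4) (l5.trans e3_5) hx
  have done4 : ∀ x ∈ cone3 ![0,1,0] ![0,0,1] ![-1,0,-1], Ψ x = ℓ1 x := fun x hx =>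
    agree3 Ψ ![0,1,0] ![0,0,1] ![-1,0,-1] x ℓ4 ℓ1 hℓ4 (l2.trans e4_2) (l3.trans e4_3) (l5.trans e4_5) hx
  have done5 : ∀ x ∈ cone3 ![0,0,1] ![-1,0,-1] ![-2,-1,0], Ψ x = ℓ1 x := fun x hx =>
    agree3 Ψ ![0,0,1] ![-1,0,-1] ![-2,-1,0] x ℓ5 ℓ1 hℓ5 (l3.trans e5_3) (l5.trans e5_5) (l6.trans e5_6) hx
  have done6 : ∀ x ∈ cone3 ![1,0,0] ![0,0,1] ![-2,-1,0], Ψ x = ℓ1 x := fun x hx =>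
    agree3 Ψ ![1,0,0] ![0,0,1] ![-2,-1,0] x ℓ6 ℓ1 hℓ6 (l1.trans e6_1) (l3.trans e6_3) (l6.trans e6_6) hx
  have done7 : ∀ x ∈ cone3 ![1,0,0] ![0,-1,-1] ![-2,-1,0], Ψ x = ℓ1 x := fun x hx =>
    agree3 Ψ ![1,0,0] ![0,-1,-1] ![-2,-1,0] x ℓ7 ℓ1 hℓ7 (l1.trans e7_1) (l4.trans e7_4) (l6.trans e7_6) hx
  have done8 : ∀ x ∈ cone3 ![0,-1,-1] ![-1,0,-1] ![-1,-1,-1], Ψ x = ℓ1 x := fun x hx =>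
    agree3 Ψ ![0,-1,-1] ![-1,0,-1] ![-1,-1,-1] x ℓ8 ℓ1 hℓ8 (l4.trans e8_4) (l5.trans e8_5) (l7.trans e8_7) hx
  have done9 : ∀ x ∈ cone3 ![0,-1,-1] ![-2,-1,0] ![-1,-1,-1], Ψ x = ℓ1 x := fun x hx =>
    agree3 Ψ ![0,-1,-1] ![-2,-1,0] ![-1,-1,-1] x ℓ9 ℓ1 hℓ9 (l4.trans e9_4) (l6.trans e9_6) (l7.trans e9_7) hx
  have done10 : ∀ x ∈ cone3 ![-1,0,-1] ![-2,-1,0] ![-2,-1,-1], Ψ x = ℓ1 x := fun x hx =>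
    agree3 Ψ ![-1,0,-1] ![-2,-1,0] ![-2,-1,-1] x ℓ10 ℓ1 hℓ10 (l5.trans e10_5) (l6.trans e10_6) (l8.trans e10_8) hx
  have done11 : ∀ x ∈ cone3 ![-1,0,-1] ![-1,-1,-1] ![-2,-1,-1], Ψ x = ℓ1 x := fun x hx =>
    agree3 Ψ ![-1,0,-1] ![-1,-1,-1] ![-2,-1,-1] x ℓ11 ℓ1 hℓ11 (l5.trans e11_5) (l7.trans e11_7) (l8.trans e11_8) hx
  have done12 : ∀ x ∈ cone3 ![-2,-1,0] ![-1,-1,-1] ![-2,-1,-1], Ψ x = ℓ1 x := fun x hx =>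
    agree3 Ψ ![-2,-1,0] ![-1,-1,-1] ![-2,-1,-1] x ℓ12 ℓ1 hℓ12 (l6.trans e12_6) (l7.trans e12_7) (l8.trans e12_8) hx
  refine ⟨ℓ1, fun x => ?_⟩
  rcases cover x with hx|hx|hx|hx|hx|hx|hx|hx|hx|hx|hx|hx
  · exact done1 x hx
  · exact done2 x hx
  · exact done3 x hx
  · exact done4 x hx
  · exact done5 x hx
  · exact done6 x hx
  · exact done7 x hx
  · exact done8 x hx
  · exact done9 x hx
  · exact done10 x hx
  · exact done11 x hx
  · exact done12 x hx
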